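/- Let p(x_1,...,x_m) = Σ_{σ ∈ S_m} α_σ x_{σ(1)}⋯x_{σ(m)} be a multilinear polynomial with Σ_σ α_σ ≠ 0. Then the image of p on UT_n is all of UT_n. -/

import Mathlib

open Matrix

lemma prod_ofFn_comm {M : Type*} [Monoid M] {m : ℕ} (σ : Equiv.Perm (Fin m))
    (f : Fin m → M) (hc : (List.ofFn (f ∘ σ)).Pairwise Commute) :
    (List.ofFn fun q => f (σ q)).prod = (List.ofFn f).prod :=
  (σ.ofFn_comp_perm f).prod_eq' hc

lemma commute_ite {M : Type*} [Monoid M] (B : M) (c d : Prop) [Decidable c] [Decidable d] :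
    Commute (if c then B else 1) (if d then B else 1) := by
  split <;> split
  · exact Commute.refl _
  · exact Commute.one_right _
  · exact Commute.one_left _
  · exact Commute.refl _

/-- If `Σ_σ α_σ ≠ 0`, then the image of the multilinear polynomial
`p = Σ_σ α_σ x_{σ(1)} ⋯ x_{σ(m)}` on `UT_n` is all of `UT_n`. -/
theorem stmt5 {K : Type*} [Field K] {n m : ℕ} (hn : 2 ≤ n) (hm : 2 ≤ m)
    (α : Equiv.Perm (Fin m) → K)
    (hsum : (∑ σ : Equiv.Perm (Fin m), α σ) ≠ 0) :
    {X : Matrix (Fin n) (Fin n) K | ∃ A : Fin m → Matrix (Fin n) (Fin n) K,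
        (∀ q, ∀ a b : Fin n, b < a → A q a b = 0) ∧
        X = ∑ σ : Equiv.Perm (Fin m), α σ • (List.ofFn fun q => A (σ q)).prod}
      = {X : Matrix (Fin n) (Fin n) K | ∀ a b : Fin n, b < a → X a b = 0} := by
  ext X
  simp only [Set.mem_setOf_eq]
  constructor
  · rintro ⟨A, hA, rfl⟩
    have hprod : ∀ σ : Equiv.Perm (Fin m),
        BlockTriangular (List.ofFn fun q => A (σ q)).prod id := by
      intro σ
      have : ∀ l : List (Matrix (Fin n) (Fin n) K),
          (∀ B ∈ l, BlockTriangular B id) → BlockTriangular l.prod id := by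
        intro l
        induction l with
        | nil => intro _; simpa using blockTriangular_one
        | cons h t ih =>
          intro hl
          rw [List.prod_cons]
          exact (hl h List.mem_cons_self).mul
            (ih fun B hB => hl B (List.mem_cons_of_mem _ hB))
      apply this
      intro B hB
      rw [List.mem_ofFn] at hB
      obtain ⟨q, rfl⟩ := hB
      exact fun a b hab => hA _ a b hab
    intro a b hab
    rw [Matrix.sum_apply]
    apply Finset.sum_eq_zero
    intro σ _
    rw [Matrix.smul_apply, hprod σ hab, smul_zero]
  · intro hX
    obtain ⟨m', rfl⟩ : ∃ m', m = m' + 1 := ⟨m - 1, by omega⟩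
    set s := ∑ σ : Equiv.Perm (Fin (m' + 1)), α σ with hs
    set B := s⁻¹ • X with hB
    refine ⟨fun q => if q = 0 then B else 1, ?_, ?_⟩
    · intro q a b hab
      by_cases hq : q = 0
      · simp [hq, hB, hX a b hab]
      · simp only [hq, if_false]
        exact Matrix.one_apply_ne (hab.ne')
    · have key : ∀ σ : Equiv.Perm (Fin (m' + 1)),
          (List.ofFn fun q => if σ q = 0 then B else 1).prod = B := by
        intro σ
        have hcomm : (List.ofFn ((fun q => if q = 0 then B else 1) ∘ σ)).Pairwise Commute := by
          rw [List.pairwise_ofFn]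
          intro i j _
          exact commute_ite B _ _
        have := prod_ofFn_comm σ (fun q => if q = 0 then B else 1) hcomm
        rw [show (List.ofFn fun q => if σ q = 0 then B else 1)
            = List.ofFn fun q => (fun r => if r = 0 then B else 1) (σ q) from rfl, this]
        rw [List.ofFn_succ]
        simp only [if_pos rfl, Fin.succ_ne_zero, if_false]
        rw [List.prod_cons]
        have h1 : (List.ofFn fun _ : Fin m' => (1 : Matrix (Fin n) (Fin n) K)).prod = 1 := by
          apply List.prod_eq_one; intro x hx
          rw [List.mem_ofFn] at hx; obtain ⟨q, rfl⟩ := hx; rfl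
        rw [h1, mul_one]
        simp
      have : (∑ σ : Equiv.Perm (Fin (m' + 1)),
          α σ • (List.ofFn fun q =>
            (fun r : Fin (m' + 1) => if r = 0 then B else 1) (σ q)).prod) = s • B := by
        simp only [key, ← Finset.sum_smul, hs]
      rw [this, hB, smul_smul, mul_inv_cancel₀ (hs ▸ hsum), one_smul]
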